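/- Let L be a simple Lie algebra over an arbitrary field, graded by a (possibly non-abelian) group G, i.e. L = ⊕_{g∈G} L_g with [L_g, L_h] ⊆ L_{gh}. Then the support {g ∈ G : L_g ≠ 0} generates an abelian subgroup of G. -/

import Mathlib

theorem key_commute
    {F : Type*} [Field F] {L : Type*} [LieRing L] [LieAlgebra F L]
    [LieAlgebra.IsSimple F L] {G : Type*} [Group G] [DecidableEq G]
    (Lg : G → Submodule F L)
    (hdec : DirectSum.IsInternal Lg)
    (hbr : ∀ g h : G, ∀ x ∈ Lg g, ∀ y ∈ Lg h, ⁅x, y⁆ ∈ Lg (g * h))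
    (g h : G) (hg : Lg g ≠ ⊥) (hh : Lg h ≠ ⊥) : g * h = h * g := by
  by_contra hc
  -- pairwise disjointness and the basic vanishing fact
  have hdisj : ∀ a b : G, a ≠ b → ∀ x : L, x ∈ Lg a → x ∈ Lg b → x = 0 := by
    intro a b hab x hxa hxb
    have := hdec.submodule_iSupIndep.pairwiseDisjoint hab
    exact (Submodule.disjoint_def.mp this) x hxa hxb
  have factA : ∀ a b : G, a * b ≠ b * a → ∀ x ∈ Lg a, ∀ y ∈ Lg b, ⁅x, y⁆ = 0 := by
    intro a b hab x hx y hy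
    have h1 : ⁅x, y⁆ ∈ Lg (a * b) := hbr a b x hx y hy
    have h2 : ⁅x, y⁆ ∈ Lg (b * a) := by
      have : ⁅x, y⁆ = -⁅y, x⁆ := by rw [← lie_skew]
      rw [this]
      exact neg_mem (hbr b a y hy x hx)
    exact hdisj _ _ hab _ h1 h2
  -- decomposition by the centralizer of g
  set D : Submodule F L := ⨆ m : {m : G // ¬ m * g = g * m}, Lg m with hD
  set I : Submodule F L := ⨆ k : {k : G // k * g = g * k}, Lg k with hI
  have hsup : I ⊔ D = ⊤ := by
    rw [eq_top_iff, ← hdec.submodule_iSup_eq_top]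
    refine iSup_le fun k => ?_
    by_cases hk : k * g = g * k
    · exact le_sup_of_le_left (le_iSup (fun k : {k : G // k * g = g * k} => Lg k) ⟨k, hk⟩)
    · exact le_sup_of_le_right (le_iSup (fun m : {m : G // ¬ m * g = g * m} => Lg m) ⟨k, hk⟩)
  -- L_g centralizes D
  have hgD : ∀ x ∈ Lg g, ∀ d ∈ D, ⁅x, d⁆ = 0 := by
    intro x hx d hd
    have : D ≤ LinearMap.ker ((LieAlgebra.ad F L x : L →ₗ[F] L)) := by
      refine iSup_le fun m => fun y hy => ?_
      simp only [LinearMap.mem_ker, LieHom.coe_toLinearMap, LieAlgebra.ad_apply]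
      exact factA g m (fun e => m.2 e.symm) x hx y hy
    simpa using this hd
  -- [I, D] ⊆ D
  have hID : ∀ a ∈ I, ∀ d ∈ D, ⁅a, d⁆ ∈ D := by
    intro a ha
    refine Submodule.iSup_induction (motive := fun a => ∀ d ∈ D, ⁅a, d⁆ ∈ D) _ ha ?_ ?_ ?_
    · rintro ⟨k, hk⟩ x hx d hd
      have : D ≤ Submodule.comap ((LieAlgebra.ad F L x : L →ₗ[F] L)) D := by
        refine iSup_le fun m => fun y hy => ?_
        simp only [Submodule.mem_comap, LieHom.coe_toLinearMap, LieAlgebra.ad_apply]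
        have hmem : ⁅x, y⁆ ∈ Lg (k * m) := hbr k m x hx y hy
        have hkm : ¬ (k * m) * g = g * (k * m) := by
          intro e
          apply m.2
          have : k * (m * g) = k * (g * m) := by
            calc k * (m * g) = (k * m) * g := by rw [mul_assoc]
            _ = g * (k * m) := e
            _ = (g * k) * m := by rw [mul_assoc]
            _ = (k * g) * m := by rw [hk]
            _ = k * (g * m) := by rw [mul_assoc]
          exact mul_left_cancel this
        exact le_iSup (fun m : {m : G // ¬ m * g = g * m} => Lg m) ⟨k * m, hkm⟩ hmem
      simpa using this hd
    · intro d _; simpa using zero_mem D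
    · intro x y hx hy d hd
      rw [add_lie]; exact add_mem (hx d hd) (hy d hd)
  -- the centralizer of D is a Lie ideal
  set N : LieIdeal F L :=
    { carrier := {x : L | ∀ d ∈ D, ⁅x, d⁆ = 0}
      add_mem' := fun {a b} ha hb => fun d hd => by rw [add_lie, ha d hd, hb d hd, add_zero]
      zero_mem' := fun d _ => zero_lie d
      smul_mem' := fun c a ha => fun d hd => by rw [smul_lie, ha d hd, smul_zero]
      lie_mem := by
        rintro z x (hx : ∀ d ∈ D, ⁅x, d⁆ = 0) d hd
        obtain ⟨a, ha, b, hb, rfl⟩ := Submodule.mem_sup.mp (hsup ▸ Submodule.mem_top (x := z))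
        have hbx : ⁅b, x⁆ = 0 := by rw [← neg_neg ⁅b, x⁆, lie_skew, hx b hb, neg_zero]
        rw [add_lie, hbx, add_zero, lie_lie, hx d hd, lie_zero, zero_sub,
          hx _ (hID a ha d hd), neg_zero] } with hN
  have hNmem : ∀ x : L, x ∈ N ↔ ∀ d ∈ D, ⁅x, d⁆ = 0 := fun x => Iff.rfl
  -- N = ⊤ since L_g ⊆ N and L_g ≠ ⊥
  have hNtop : N = ⊤ := by
    rcases LieAlgebra.IsSimple.eq_bot_or_eq_top N with hbot | htop
    · exfalso
      obtain ⟨x, hxg, hx0⟩ := (Submodule.ne_bot_iff _).mp hg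
      have hxN : x ∈ N := (hNmem x).mpr (hgD x hxg)
      rw [hbot] at hxN
      exact hx0 (by simpa using hxN)
    · exact htop
  have hall : ∀ x : L, ∀ d ∈ D, ⁅x, d⁆ = 0 := by
    intro x
    have : x ∈ N := hNtop ▸ LieSubmodule.mem_top x
    exact this
  -- D is then a trivial ideal
  set Di : LieIdeal F L :=
    { D with
      lie_mem := fun {z} {d} hd => by
        have : ⁅z, d⁆ = 0 := hall z d hd
        rw [this]; exact zero_mem D } with hDi
  rcases LieAlgebra.IsSimple.eq_bot_or_eq_top Di with hbot | htop
  · obtain ⟨x, hxh, hx0⟩ := (Submodule.ne_bot_iff _).mp hh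
    have hxD : x ∈ D := le_iSup (fun m : {m : G // ¬ m * g = g * m} => Lg m)
      ⟨h, fun e => hc (e.symm)⟩ hxh
    have : x ∈ Di := hxD
    rw [hbot] at this
    exact hx0 (by simpa using this)
  · apply LieAlgebra.IsSimple.non_abelian (R := F) (L := L)
    constructor
    intro x y
    have hyD : y ∈ D := by
      have : y ∈ Di := htop ▸ LieSubmodule.mem_top y
      exact this
    exact hall x y hyD

theorem support_of_grading_generates_abelian_subgroup
    {F : Type*} [Field F] {L : Type*} [LieRing L] [LieAlgebra F L]
    [LieAlgebra.IsSimple F L] {G : Type*} [Group G] [DecidableEq G]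
    (Lg : G → Submodule F L)
    (hdec : DirectSum.IsInternal Lg)
    (hbr : ∀ g h : G, ∀ x ∈ Lg g, ∀ y ∈ Lg h, ⁅x, y⁆ ∈ Lg (g * h)) :
    ∀ a ∈ Subgroup.closure {g : G | Lg g ≠ ⊥},
      ∀ b ∈ Subgroup.closure {g : G | Lg g ≠ ⊥}, a * b = b * a := by
  have key : ∀ g ∈ {g : G | Lg g ≠ ⊥}, ∀ h ∈ {g : G | Lg g ≠ ⊥}, Commute g h :=
    fun g hg h hh => key_commute Lg hdec hbr g h hg hh
  have step1 : ∀ g ∈ {g : G | Lg g ≠ ⊥}, ∀ b ∈ Subgroup.closure {g : G | Lg g ≠ ⊥},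
      Commute g b := by
    intro g hg b hb
    induction hb using Subgroup.closure_induction with
    | mem x hx => exact key g hg x hx
    | one => exact Commute.one_right g
    | mul x y hx hy ihx ihy => exact ihx.mul_right ihy
    | inv x hx ihx => exact ihx.inv_right
  intro a ha b hb
  induction ha using Subgroup.closure_induction with
  | mem x hx => exact step1 x hx b hb
  | one => exact Commute.one_left b
  | mul x y hx hy ihx ihy => exact (Commute.mul_left ihx ihy : Commute (x*y) b)
  | inv x hx ihx => exact (Commute.inv_left ihx : Commute x⁻¹ b)
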